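/- For every t ∈ ℝ one has −1 ≤ t g'(t)/g(t) ≤ 0. -/

import Mathlib

open Real Filter Set Topology

/-- The constant α = (9+3√5)/2. -/
noncomputable def alph : ℝ := (9 + 3 * Real.sqrt 5) / 2

/-- The constant β = 2 α^{3/2} √(α−1). -/
noncomputable def bet : ℝ := 2 * alph ^ ((3 : ℝ) / 2) * Real.sqrt (alph - 1)

/-- The change-of-variable function g (extended evenly to negative arguments):
g(s) = √(1 − k s²) for |s| < (αk)^{−1/2}, and g(s) = 1/(βk s²) + √3/2 for |s| ≥ (αk)^{−1/2}. -/
noncomputable def g (k s : ℝ) : ℝ :=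
  if |s| < 1 / Real.sqrt (alph * k) then Real.sqrt (1 - k * s ^ 2)
  else 1 / (bet * k * s ^ 2) + Real.sqrt 3 / 2

/-- G(t) = ∫₀ᵗ g(s) ds. -/
noncomputable def G (k t : ℝ) : ℝ := ∫ s in (0 : ℝ)..t, g k s

lemma s5sq : Real.sqrt 5 ^ 2 = 5 := Real.sq_sqrt (by norm_num)
lemma s3sq : Real.sqrt 3 ^ 2 = 3 := Real.sq_sqrt (by norm_num)

lemma alph_gt_two : 2 < alph := by
  have h := Real.sqrt_nonneg 5
  unfold alph; nlinarith

lemma alph_pos : 0 < alph := by linarith [alph_gt_two]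

lemma sa_sq : Real.sqrt alph ^ 2 = alph := Real.sq_sqrt alph_pos.le
lemma sb_sq : Real.sqrt (alph - 1) ^ 2 = alph - 1 := Real.sq_sqrt (by linarith [alph_gt_two])
lemma sa_pos : 0 < Real.sqrt alph := Real.sqrt_pos.2 alph_pos
lemma sb_pos : 0 < Real.sqrt (alph - 1) := Real.sqrt_pos.2 (by linarith [alph_gt_two])
lemma sa_ge_one : 1 ≤ Real.sqrt alph := by nlinarith [sa_sq, sa_pos, alph_gt_two]
lemma sb_ge_one : 1 ≤ Real.sqrt (alph - 1) := by nlinarith [sb_sq, sb_pos, alph_gt_two]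

lemma bet_eq : bet = 2 * alph * (Real.sqrt alph * Real.sqrt (alph - 1)) := by
  unfold bet
  rw [show (3:ℝ)/2 = 1 + 1/2 by norm_num, Real.rpow_add alph_pos, Real.rpow_one,
    ← Real.sqrt_eq_rpow]
  ring

lemma bet_pos : 0 < bet := by
  rw [bet_eq]
  have h1 := sa_pos; have h2 := sb_pos; have h3 := alph_pos
  positivity

lemma keyid : Real.sqrt 3 * (Real.sqrt alph * Real.sqrt (alph - 1)) = 6 + 3 * Real.sqrt 5 := by
  have e : (Real.sqrt 3 * (Real.sqrt alph * Real.sqrt (alph - 1))) ^ 2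
      = (6 + 3 * Real.sqrt 5) ^ 2 := by
    rw [mul_pow, mul_pow, s3sq, sa_sq, sb_sq]
    unfold alph
    linear_combination (-(9:ℝ)/4) * s5sq
  have h1 : 0 ≤ Real.sqrt 3 * (Real.sqrt alph * Real.sqrt (alph - 1)) := by positivity
  have h2 : (0:ℝ) ≤ 6 + 3 * Real.sqrt 5 := by positivity
  calc Real.sqrt 3 * (Real.sqrt alph * Real.sqrt (alph - 1))
      = Real.sqrt ((Real.sqrt 3 * (Real.sqrt alph * Real.sqrt (alph - 1))) ^ 2) :=
        (Real.sqrt_sq h1).symm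
    _ = Real.sqrt ((6 + 3 * Real.sqrt 5) ^ 2) := by rw [e]
    _ = 6 + 3 * Real.sqrt 5 := Real.sqrt_sq h2

lemma kR2 {k : ℝ} (hk : 0 < k) : k * (1 / Real.sqrt (alph * k)) ^ 2 = 1 / alph := by
  rw [div_pow, one_pow, Real.sq_sqrt (mul_nonneg alph_pos.le hk.le), mul_one_div,
    div_eq_div_iff (mul_pos alph_pos hk).ne' alph_pos.ne']
  ring

lemma R_pos {k : ℝ} (hk : 0 < k) : 0 < 1 / Real.sqrt (alph * k) :=
  div_pos one_pos (Real.sqrt_pos.2 (mul_pos alph_pos hk))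

lemma hb {k : ℝ} (hk : 0 < k) {s : ℝ} (hs : k * s ^ 2 = 1 / alph) :
    bet * k * s ^ 2 = 2 * (Real.sqrt alph * Real.sqrt (alph - 1)) := by
  have h : bet * k * s ^ 2 = bet * (k * s ^ 2) := by ring
  have ha := alph_pos.ne'
  rw [h, hs, bet_eq]
  field_simp

lemma sqrt_one_sub {k : ℝ} (hk : 0 < k) {s : ℝ} (hs : k * s ^ 2 = 1 / alph) :
    Real.sqrt (1 - k * s ^ 2) = Real.sqrt (alph - 1) / Real.sqrt alph := by
  rw [hs, show (1:ℝ) - 1 / alph = (alph - 1) / alph by field_simp [alph_pos.ne'],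
    Real.sqrt_div (by linarith [alph_gt_two])]

lemma value_match {k : ℝ} (hk : 0 < k) {s : ℝ} (hs : k * s ^ 2 = 1 / alph) :
    1 / (bet * k * s ^ 2) + Real.sqrt 3 / 2 = Real.sqrt (1 - k * s ^ 2) := by
  rw [hb hk hs, sqrt_one_sub hk hs]
  have hsa := sa_pos
  have hsb := sb_pos
  have halph : alph = (9 + 3 * Real.sqrt 5) / 2 := rfl
  field_simp
  nlinarith [keyid, sa_sq, sb_sq, s5sq]

lemma g_eq_low {k : ℝ} (hk : 0 < k) {s : ℝ} (hs : |s| ≤ 1 / Real.sqrt (alph * k)) :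
    g k s = Real.sqrt (1 - k * s ^ 2) := by
  rcases lt_or_eq_of_le hs with h | h
  · rw [g, if_pos h]
  · rw [g, if_neg (by rw [h]; exact lt_irrefl _)]
    exact value_match hk (by rw [← sq_abs s, h]; exact kR2 hk)

lemma hasDeriv_f1 {k : ℝ} {t : ℝ} (h : k * t ^ 2 < 1) :
    HasDerivAt (fun s => Real.sqrt (1 - k * s ^ 2))
      (-(2 * k * t) / (2 * Real.sqrt (1 - k * t ^ 2))) t := by
  have h1 : HasDerivAt (fun s : ℝ => 1 - k * s ^ 2) (-(2 * k * t)) t := by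
    have := HasDerivAt.const_sub 1 ((hasDerivAt_pow 2 t).const_mul k)
    exact this.congr_deriv (by push_cast; ring)
  have h0 : (1 : ℝ) - k * t ^ 2 ≠ 0 := by linarith
  exact h1.sqrt h0

lemma hasDeriv_f2 {k : ℝ} (hk : 0 < k) {t : ℝ} (ht : t ≠ 0) :
    HasDerivAt (fun s => 1 / (bet * k * s ^ 2) + Real.sqrt 3 / 2)
      (-(bet * k * (2 * t)) / (bet * k * t ^ 2) ^ 2) t := by
  have h1 : HasDerivAt (fun s : ℝ => bet * k * s ^ 2) (bet * k * (2 * t)) t := by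
    have := (hasDerivAt_pow 2 t).const_mul (bet * k)
    exact this.congr_deriv (by push_cast; ring)
  have hne : bet * k * t ^ 2 ≠ 0 := by
    have := bet_pos
    positivity
  have := (h1.inv hne).add_const (Real.sqrt 3 / 2)
  simpa [one_div] using this

lemma hasDeriv_low {k : ℝ} (hk : 0 < k) {t : ℝ} (h0 : 0 ≤ t)
    (h1 : t ≤ 1 / Real.sqrt (alph * k)) :
    HasDerivAt (g k) (-(2 * k * t) / (2 * Real.sqrt (1 - k * t ^ 2))) t := by
  set R := 1 / Real.sqrt (alph * k) with hRdef
  have hRpos : 0 < R := R_pos hk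
  have hkR : k * R ^ 2 = 1 / alph := kR2 hk
  have hainv : 1 / alph < 1 := by
    rw [div_lt_one alph_pos]; linarith [alph_gt_two]
  have hkt : k * t ^ 2 ≤ 1 / alph := by
    have ht2 : t ^ 2 ≤ R ^ 2 := by nlinarith
    have := mul_le_mul_of_nonneg_left ht2 hk.le
    linarith
  have hlt1 : k * t ^ 2 < 1 := by linarith
  have hf1 := hasDeriv_f1 hlt1
  rcases lt_or_eq_of_le h1 with hlt | heq
  · apply hf1.congr_of_eventuallyEq
    have hmem : Ioo (-R) R ∈ 𝓝 t := isOpen_Ioo.mem_nhds ⟨by linarith, hlt⟩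
    filter_upwards [hmem] with s hs
    exact g_eq_low hk (abs_le.2 ⟨hs.1.le, hs.2.le⟩)
  · have hkt2 : k * t ^ 2 = 1 / alph := by rw [heq]; exact hkR
    have htpos : 0 < t := heq ▸ hRpos
    have hL : HasDerivWithinAt (g k) (-(2 * k * t) / (2 * Real.sqrt (1 - k * t ^ 2)))
        (Iic t) t := by
      apply hf1.hasDerivWithinAt.congr_of_eventuallyEq
      · have hmem : ∀ᶠ s in 𝓝 t, s ∈ Ioi (-t) := isOpen_Ioi.eventually_mem (mem_Ioi.2 (by linarith))
        filter_upwards [eventually_nhdsWithin_of_eventually_nhds hmem,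
          eventually_mem_nhdsWithin] with s hs1 hs2
        have h1' := mem_Ioi.1 hs1
        have h2' := mem_Iic.1 hs2
        exact g_eq_low hk (abs_le.2 ⟨by linarith, by linarith⟩)
      · exact g_eq_low hk (by rw [abs_of_nonneg h0]; linarith)
    have hf2 := hasDeriv_f2 hk htpos.ne'
    have hd : -(bet * k * (2 * t)) / (bet * k * t ^ 2) ^ 2
        = -(2 * k * t) / (2 * Real.sqrt (1 - k * t ^ 2)) := by
      rw [sqrt_one_sub hk hkt2, hb hk hkt2, bet_eq]
      have hsa := sa_pos
      have hsb := sb_pos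
      field_simp
      linear_combination sa_sq
    have hR' : HasDerivWithinAt (g k) (-(2 * k * t) / (2 * Real.sqrt (1 - k * t ^ 2)))
        (Ici t) t := by
      rw [← hd]
      apply hf2.hasDerivWithinAt.congr
      · intro s hs
        have hs' := mem_Ici.1 hs
        rw [g, if_neg]
        push_neg
        rw [abs_of_pos (lt_of_lt_of_le htpos hs')]
        linarith
      · rw [g, if_neg]
        push_neg
        rw [abs_of_nonneg h0]
        linarith
    have hU := hL.union hR'
    rw [Iic_union_Ici] at hU
    exact hasDerivWithinAt_univ.1 hU

lemma bound_low {k : ℝ} (hk : 0 < k) {t : ℝ} (h0 : 0 ≤ t)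
    (h1 : t ≤ 1 / Real.sqrt (alph * k)) :
    -1 ≤ t * deriv (g k) t / g k t ∧ t * deriv (g k) t / g k t ≤ 0 := by
  set R := 1 / Real.sqrt (alph * k) with hRdef
  have hRpos : 0 < R := R_pos hk
  have hkR : k * R ^ 2 = 1 / alph := kR2 hk
  have hainv : 1 / alph < 1 / 2 := by
    rw [div_lt_div_iff₀ alph_pos (by norm_num)]; linarith [alph_gt_two]
  have hkt : k * t ^ 2 ≤ 1 / alph := by
    have ht2 : t ^ 2 ≤ R ^ 2 := by nlinarith
    have := mul_le_mul_of_nonneg_left ht2 hk.le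
    linarith
  have hd := (hasDeriv_low hk h0 h1).deriv
  have hg := g_eq_low hk (abs_le.2 ⟨by linarith, h1⟩)
  rw [hd, hg]
  have hupos : 0 < 1 - k * t ^ 2 := by linarith
  have hspos : 0 < Real.sqrt (1 - k * t ^ 2) := Real.sqrt_pos.2 hupos
  have hs : Real.sqrt (1 - k * t ^ 2) * Real.sqrt (1 - k * t ^ 2) = 1 - k * t ^ 2 :=
    Real.mul_self_sqrt hupos.le
  have key : t * (-(2 * k * t) / (2 * Real.sqrt (1 - k * t ^ 2))) / Real.sqrt (1 - k * t ^ 2)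
      = -(k * t ^ 2) / (1 - k * t ^ 2) := by
    calc _ = -(k * t ^ 2) / (Real.sqrt (1 - k * t ^ 2) * Real.sqrt (1 - k * t ^ 2)) := by ring
      _ = _ := by rw [hs]
  rw [key]
  constructor
  · rw [neg_div, neg_le_neg_iff, div_le_one hupos]
    linarith
  · rw [neg_div]
    have : 0 ≤ k * t ^ 2 / (1 - k * t ^ 2) := div_nonneg (by positivity) hupos.le
    linarith

lemma bound_high {k : ℝ} (hk : 0 < k) {t : ℝ} (ht : 1 / Real.sqrt (alph * k) < t) :
    -1 ≤ t * deriv (g k) t / g k t ∧ t * deriv (g k) t / g k t ≤ 0 := by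
  set R := 1 / Real.sqrt (alph * k) with hRdef
  have hRpos : 0 < R := R_pos hk
  have htpos : 0 < t := lt_trans hRpos ht
  have hf2 := hasDeriv_f2 hk htpos.ne'
  have hgev : ∀ᶠ s in 𝓝 t,
      g k s = (fun s => 1 / (bet * k * s ^ 2) + Real.sqrt 3 / 2) s := by
    filter_upwards [isOpen_Ioi.eventually_mem (show t ∈ Ioi R from ht)] with s hs
    rw [g, if_neg]
    push_neg
    rw [abs_of_pos (lt_trans hRpos hs)]
    exact hs.le
  have hd := (hf2.congr_of_eventuallyEq hgev).deriv
  have hg : g k t = 1 / (bet * k * t ^ 2) + Real.sqrt 3 / 2 := by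
    rw [g, if_neg]
    push_neg
    rw [abs_of_pos htpos]
    exact ht.le
  rw [hd, hg]
  have hbp := bet_pos
  have hxpos : 0 < bet * k * t ^ 2 := by positivity
  have hx : bet * k * t ^ 2 ≠ 0 := hxpos.ne'
  have hs3 : 1 ≤ Real.sqrt 3 := by nlinarith [s3sq, Real.sqrt_nonneg 3]
  have hden : 0 < 2 + Real.sqrt 3 * (bet * k * t ^ 2) := by nlinarith
  have key : t * (-(bet * k * (2 * t)) / (bet * k * t ^ 2) ^ 2)
      / (1 / (bet * k * t ^ 2) + Real.sqrt 3 / 2)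
      = -4 / (2 + Real.sqrt 3 * (bet * k * t ^ 2)) := by
    field_simp
    ring
  rw [key]
  have hx2 : 2 ≤ bet * k * t ^ 2 := by
    have hR2t2 : R ^ 2 ≤ t ^ 2 := by nlinarith
    have h1 : bet * k * R ^ 2 ≤ bet * k * t ^ 2 :=
      mul_le_mul_of_nonneg_left hR2t2 (mul_pos hbp hk).le
    have h2 : bet * k * R ^ 2 = 2 * (Real.sqrt alph * Real.sqrt (alph - 1)) := hb hk (kR2 hk)
    nlinarith [sa_ge_one, sb_ge_one]
  constructor
  · rw [neg_div, neg_le_neg_iff, div_le_one hden]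
    nlinarith
  · rw [neg_div]
    have : 0 ≤ 4 / (2 + Real.sqrt 3 * (bet * k * t ^ 2)) := div_nonneg (by norm_num) hden.le
    linarith

lemma main_nonneg {k : ℝ} (hk : 0 < k) {t : ℝ} (h0 : 0 ≤ t) :
    -1 ≤ t * deriv (g k) t / g k t ∧ t * deriv (g k) t / g k t ≤ 0 := by
  rcases le_or_gt t (1 / Real.sqrt (alph * k)) with h | h
  · exact bound_low hk h0 h
  · exact bound_high hk h

/-- For every t ∈ ℝ, −1 ≤ t g'(t)/g(t) ≤ 0. -/
theorem stmt4 (k : ℝ) (hk : 0 < k) (t : ℝ) :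
    -1 ≤ t * deriv (g k) t / g k t ∧ t * deriv (g k) t / g k t ≤ 0 := by
  rcases le_or_gt 0 t with h | h
  · exact main_nonneg hk h
  · have hgev : (fun x => g k (-x)) = g k := by
      funext x
      simp [g, abs_neg, neg_sq]
    have hdt : deriv (g k) t = -deriv (g k) (-t) := by
      conv_lhs => rw [← hgev]
      rw [deriv_comp_neg]
    have hgt : g k t = g k (-t) := by
      simp [g, abs_neg, neg_sq]
    have h2 := main_nonneg hk (show (0:ℝ) ≤ -t by linarith)
    have he : t * deriv (g k) t / g k t = (-t) * deriv (g k) (-t) / g k (-t) := by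
      rw [hdt, hgt]
      ring
    rw [he]
    exact ⟨h2.1, h2.2⟩
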